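/- Let ψ : [0,∞) → (0,∞) be Lipschitz with constant L and ψ(0) = 1, let μ be a probability measure on ℝ^d supported in the closed ball B(0,R), and define F(x) = ∫ ψ(|x−y|)(y−x) dμ(y). Then for all x, x̃ ∈ B(0,R): |F(x) − F(x̃)| ≤ (1 + 2RL)|x − x̃|, and |F(x)| ≤ 2R. -/

import Mathlib

open MeasureTheory in
theorem symmetric_velocity_field_lipschitz_bounded {d : ℕ}
    (ψ : ℝ → ℝ) (L : NNReal) (hL : LipschitzOnWith L ψ (Set.Ici 0))
    (hψpos : ∀ r, 0 ≤ r → 0 < ψ r)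
    (hψmono : ∀ r s, 0 ≤ r → r ≤ s → ψ s ≤ ψ r) (hψ0 : ψ 0 = 1)
    (R : ℝ) (hR : 0 ≤ R)
    (μ : Measure (EuclideanSpace ℝ (Fin d))) [IsProbabilityMeasure μ]
    (hsupp : μ (Metric.closedBall (0 : EuclideanSpace ℝ (Fin d)) R)ᶜ = 0)
    (F : EuclideanSpace ℝ (Fin d) → EuclideanSpace ℝ (Fin d))
    (hF : ∀ x, F x = ∫ y, ψ ‖x - y‖ • (y - x) ∂μ) :
    ∀ x ∈ Metric.closedBall (0 : EuclideanSpace ℝ (Fin d)) R,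
    ∀ z ∈ Metric.closedBall (0 : EuclideanSpace ℝ (Fin d)) R,
      ‖F x - F z‖ ≤ (1 + 2 * R * L) * ‖x - z‖ ∧ ‖F x‖ ≤ 2 * R := by
  intro x hx z hz
  set B := Metric.closedBall (0 : EuclideanSpace ℝ (Fin d)) R with hB
  have hmem : ∀ᵐ y ∂μ, y ∈ B := by
    rw [MeasureTheory.ae_iff]
    exact hsupp
  have hrestr : μ.restrict B = μ := Measure.restrict_eq_self_of_ae_mem hmem
  -- continuity
  have hψc : ContinuousOn ψ (Set.Ici 0) := hL.continuousOn
  have hcont : ∀ w : EuclideanSpace ℝ (Fin d),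
      Continuous fun y : EuclideanSpace ℝ (Fin d) => ψ ‖w - y‖ • (y - w) := by
    intro w
    have h1 : Continuous fun y : EuclideanSpace ℝ (Fin d) => ψ ‖w - y‖ :=
      hψc.comp_continuous (by continuity) (fun y => norm_nonneg _)
    exact h1.smul (by continuity)
  have hint : ∀ w : EuclideanSpace ℝ (Fin d),
      Integrable (fun y => ψ ‖w - y‖ • (y - w)) μ := by
    intro w
    rw [← hrestr]
    exact (hcont w).continuousOn.integrableOn_compact (isCompact_closedBall _ _)
  -- ψ bounded by 1 on Ici 0
  have hψle : ∀ r : ℝ, 0 ≤ r → ψ r ≤ 1 := fun r hr => hψ0 ▸ hψmono 0 r le_rfl hr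
  have hψge : ∀ r : ℝ, 0 ≤ r → 0 ≤ ψ r := fun r hr => (hψpos r hr).le
  have hxz : (0:ℝ) ≤ ‖x - z‖ := norm_nonneg _
  constructor
  · -- Lipschitz bound
    have key : ∀ y ∈ B,
        ‖ψ ‖x - y‖ • (y - x) - ψ ‖z - y‖ • (y - z)‖ ≤ (1 + 2 * R * L) * ‖x - z‖ := by
      intro y hy
      have hyR : ‖y‖ ≤ R := by simpa [hB] using hy
      have hzR : ‖z‖ ≤ R := by simpa [hB] using hz
      have hdecomp : ψ ‖x - y‖ • (y - x) - ψ ‖z - y‖ • (y - z)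
          = ψ ‖x - y‖ • (z - x) + (ψ ‖x - y‖ - ψ ‖z - y‖) • (y - z) := by
        rw [sub_smul]
        abel_nf
        module
      rw [hdecomp]
      have h1 : ‖ψ ‖x - y‖ • (z - x)‖ ≤ 1 * ‖x - z‖ := by
        rw [norm_smul, Real.norm_eq_abs, abs_of_nonneg (hψge _ (norm_nonneg _))]
        calc ψ ‖x - y‖ * ‖z - x‖ ≤ 1 * ‖z - x‖ :=
              mul_le_mul_of_nonneg_right (hψle _ (norm_nonneg _)) (norm_nonneg _)
          _ = 1 * ‖x - z‖ := by rw [norm_sub_rev]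
      have h2 : ‖(ψ ‖x - y‖ - ψ ‖z - y‖) • (y - z)‖ ≤ (L * ‖x - z‖) * (2 * R) := by
        rw [norm_smul, Real.norm_eq_abs]
        have hlip : |ψ ‖x - y‖ - ψ ‖z - y‖| ≤ L * ‖x - z‖ := by
          have := hL.dist_le_mul ‖x - y‖ (Set.mem_Ici.2 (norm_nonneg _))
            ‖z - y‖ (Set.mem_Ici.2 (norm_nonneg _))
          rw [Real.dist_eq, Real.dist_eq] at this
          refine this.trans (mul_le_mul_of_nonneg_left ?_ L.2)
          calc |‖x - y‖ - ‖z - y‖| ≤ ‖(x - y) - (z - y)‖ := abs_norm_sub_norm_le _ _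
            _ = ‖x - z‖ := by congr 1; abel
        have hyz : ‖y - z‖ ≤ 2 * R := by
          calc ‖y - z‖ ≤ ‖y‖ + ‖z‖ := norm_sub_le _ _
            _ ≤ R + R := add_le_add hyR hzR
            _ = 2 * R := by ring
        exact mul_le_mul hlip hyz (norm_nonneg _)
          (mul_nonneg L.2 hxz)
      calc ‖ψ ‖x - y‖ • (z - x) + (ψ ‖x - y‖ - ψ ‖z - y‖) • (y - z)‖
          ≤ ‖ψ ‖x - y‖ • (z - x)‖ + ‖(ψ ‖x - y‖ - ψ ‖z - y‖) • (y - z)‖ :=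
            norm_add_le _ _
        _ ≤ 1 * ‖x - z‖ + (L * ‖x - z‖) * (2 * R) := add_le_add h1 h2
        _ = (1 + 2 * R * L) * ‖x - z‖ := by ring
    rw [hF, hF, ← integral_sub (hint x) (hint z)]
    have := norm_integral_le_of_norm_le_const (C := (1 + 2 * R * L) * ‖x - z‖)
      (μ := μ) (f := fun y => ψ ‖x - y‖ • (y - x) - ψ ‖z - y‖ • (y - z))
      (by filter_upwards [hmem] with y hy using key y hy)
    simpa using this
  · -- bound
    have key : ∀ y ∈ B, ‖ψ ‖x - y‖ • (y - x)‖ ≤ 2 * R := by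
      intro y hy
      have hyR : ‖y‖ ≤ R := by simpa [hB] using hy
      have hxR : ‖x‖ ≤ R := by simpa [hB] using hx
      rw [norm_smul, Real.norm_eq_abs, abs_of_nonneg (hψge _ (norm_nonneg _))]
      calc ψ ‖x - y‖ * ‖y - x‖ ≤ 1 * ‖y - x‖ :=
            mul_le_mul_of_nonneg_right (hψle _ (norm_nonneg _)) (norm_nonneg _)
        _ = ‖y - x‖ := one_mul _
        _ ≤ ‖y‖ + ‖x‖ := norm_sub_le _ _
        _ ≤ R + R := add_le_add hyR hxR
        _ = 2 * R := by ring
    rw [hF]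
    have := norm_integral_le_of_norm_le_const (C := 2 * R) (μ := μ)
      (f := fun y => ψ ‖x - y‖ • (y - x))
      (by filter_upwards [hmem] with y hy using key y hy)
    simpa using this
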